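/- Let μ be a probability measure on [0, 1] with continuous density f with respect to Lebesgue measure, and suppose lim_{x→1⁻} f(x)/(1−x)^β = c for some constants β > 0 and c > 0. Then, with ζ_μ(k) = ∑_{j=1}^∞ m_j^k the moment zeta function of μ, lim_{n→∞} n^{−1/(1+β)} ∑_{k=1}^n (−1)^k C(n,k) ζ_μ(k) = −(c Γ(β + 1))^{1/(β+1)} Γ(β/(β + 1)). -/

import Mathlib

open MeasureTheory Filter Finset
open scoped Topology

section AuxLemmas


open Filter Real Topology

lemma aux_exp (u : ℕ → ℝ) (t : ℝ) (ht : 0 < t)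
    (h : Tendsto (fun n : ℕ => (n : ℝ) * u n) atTop (𝓝 t)) :
    Tendsto (fun n : ℕ => (1 - u n) ^ n) atTop (𝓝 (Real.exp (-t))) := by
  have hu0 : Tendsto u atTop (𝓝 0) := by
    have h2 : Tendsto (fun n : ℕ => ((n : ℝ) * u n) / n) atTop (𝓝 0) :=
      h.div_atTop tendsto_natCast_atTop_atTop
    refine h2.congr' ?_
    filter_upwards [eventually_ge_atTop 1] with n hn
    have : (n : ℝ) ≠ 0 := by positivity
    field_simp
  have hupos : ∀ᶠ n in atTop, 0 < u n := by
    filter_upwards [h.eventually (lt_mem_nhds ht), eventually_ge_atTop 1] with n h1 h2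
    by_contra hle
    push_neg at hle
    nlinarith [mul_nonpos_of_nonneg_of_nonpos (by positivity : (0:ℝ) ≤ (n:ℝ)) hle]
  have hlog : Tendsto (fun x : ℝ => Real.log (1 + x) / x) (𝓝[≠] 0) (𝓝 1) := by
    have d : HasDerivAt (fun x : ℝ => Real.log (1 + x)) 1 0 := by
      have := ((hasDerivAt_id (0:ℝ)).const_add 1).log (by norm_num)
      simpa using this
    have := hasDerivAt_iff_tendsto_slope.mp d
    refine this.congr ?_
    intro y
    simp [slope, Real.log_one, div_eq_inv_mul]
  have hne : Tendsto (fun n : ℕ => -u n) atTop (𝓝[≠] 0) := by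
    rw [tendsto_nhdsWithin_iff]
    refine ⟨by simpa using hu0.neg, ?_⟩
    filter_upwards [hupos] with n hn
    simp only [Set.mem_compl_iff, Set.mem_singleton_iff, neg_eq_zero]
    exact ne_of_gt hn
  have hratio : Tendsto (fun n : ℕ => Real.log (1 - u n) / (-u n)) atTop (𝓝 1) := by
    have := hlog.comp hne
    refine this.congr ?_
    intro n
    simp only [Function.comp]
    ring_nf
  have key : Tendsto (fun n : ℕ => (n : ℝ) * Real.log (1 - u n)) atTop (𝓝 (-t)) := by
    have h3 : Tendsto (fun n : ℕ => ((n : ℝ) * u n) * (Real.log (1 - u n) / (-u n)) * (-1))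
        atTop (𝓝 (t * 1 * (-1))) := (h.mul hratio).mul_const _
    have h4 : t * 1 * (-1) = -t := by ring
    rw [h4] at h3
    refine h3.congr' ?_
    filter_upwards [hupos] with n hn
    have : u n ≠ 0 := ne_of_gt hn
    field_simp
  have hexp : Tendsto (fun n : ℕ => Real.exp ((n : ℝ) * Real.log (1 - u n))) atTop
      (𝓝 (Real.exp (-t))) := (Real.continuous_exp.tendsto _).comp key
  refine hexp.congr' ?_
  filter_upwards [hu0.eventually (eventually_lt_nhds (by norm_num : (0:ℝ) < 1))] with n hn
  rw [Real.exp_nat_mul, Real.exp_log (by linarith)]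
open MeasureTheory Filter Real Topology Set

lemma aux_bound_meas (C p : ℝ) : Measurable (fun y : ℝ => min 1 (C * y ^ (-p))) := by
  fun_prop

lemma aux_bound (C p : ℝ) (hC : 0 ≤ C) (hp : 1 < p) :
    IntegrableOn (fun y : ℝ => min 1 (C * y ^ (-p))) (Set.Ioi 0) := by
  have hsplit : Set.Ioi (0:ℝ) = Set.Ioc 0 1 ∪ Set.Ioi 1 := by
    ext y; simp only [Set.mem_Ioi, Set.mem_union, Set.mem_Ioc]
    constructor
    · intro h; rcases le_or_gt y 1 with h1 | h1
      · exact Or.inl ⟨h, h1⟩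
      · exact Or.inr h1
    · rintro (⟨h, _⟩ | h) <;> linarith
  rw [hsplit]
  apply IntegrableOn.union
  · refine Integrable.mono' (g := fun _ => (1:ℝ)) (integrableOn_const ?_) ?_ ?_
    · simp [Real.volume_Ioc]
    · exact (aux_bound_meas C p).aestronglyMeasurable.restrict
    · refine (ae_restrict_iff' measurableSet_Ioc).mpr (Filter.Eventually.of_forall ?_)
      intro y hy
      have h1 : 0 ≤ C * y ^ (-p) := by
        have : (0:ℝ) < y := hy.1
        positivity
      rw [Real.norm_eq_abs, abs_of_nonneg (le_min zero_le_one h1)]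
      exact min_le_left _ _
  · refine Integrable.mono' (((integrableOn_Ioi_rpow_iff zero_lt_one).mpr
      (by linarith : -p < -1)).const_mul C) ?_ ?_
    · exact (aux_bound_meas C p).aestronglyMeasurable.restrict
    · refine (ae_restrict_iff' measurableSet_Ioi).mpr (Filter.Eventually.of_forall ?_)
      intro y hy
      have hy0 : (0:ℝ) < y := lt_trans zero_lt_one hy
      have h1 : 0 ≤ C * y ^ (-p) := by positivity
      rw [Real.norm_eq_abs, abs_of_nonneg (le_min zero_le_one h1)]
      exact min_le_right _ _
open MeasureTheory Filter Real Topology Set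

lemma aux_strip (M : ℝ) (hM : 0 < M) :
    ∫⁻ t in Set.Ioi (0:ℝ), (Set.Iio M).indicator (fun t => ENNReal.ofReal (Real.exp (-t))) t
      = ENNReal.ofReal (1 - Real.exp (-M)) := by
  rw [lintegral_indicator measurableSet_Iio,
    Measure.restrict_restrict measurableSet_Iio, Set.Iio_inter_Ioi]
  have hInt : IntegrableOn (fun t : ℝ => Real.exp (-t)) (Set.Ioo 0 M) := by
    have : IntegrableOn (fun t : ℝ => Real.exp (-t)) (Set.Icc 0 M) :=
      (Real.continuous_exp.comp continuous_neg).continuousOn.integrableOn_compact isCompact_Icc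
    exact this.mono_set Set.Ioo_subset_Icc_self
  rw [← ofReal_integral_eq_lintegral_ofReal hInt
    (Filter.Eventually.of_forall fun t => (Real.exp_pos _).le)]
  congr 1
  rw [← MeasureTheory.integral_Ioc_eq_integral_Ioo,
    ← intervalIntegral.integral_of_le hM.le]
  rw [intervalIntegral.integral_comp_neg (fun t => Real.exp t)]
  rw [integral_exp]
  simp

lemma aux_int (a p : ℝ) (ha : 0 < a) (hp : 1 < p) :
    ∫ y in Set.Ioi (0:ℝ), (1 - Real.exp (-(a * y ^ (-p)))) =
      a ^ (1/p) * Real.Gamma (1 - 1/p) := by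
  have hp0 : (0:ℝ) < p := by linarith
  have hq0 : (0:ℝ) < 1/p := by positivity
  have hq1 : 1/p < 1 := by rw [div_lt_one hp0]; exact hp
  have hs : (0:ℝ) < 1 - 1/p := by linarith
  set G : ℝ → ℝ := fun y => 1 - Real.exp (-(a * y ^ (-p))) with hG
  have hGm : Measurable G := by fun_prop
  have hGnn : ∀ᵐ y ∂(volume.restrict (Set.Ioi (0:ℝ))), 0 ≤ G y := by
    refine (ae_restrict_iff' measurableSet_Ioi).mpr (Filter.Eventually.of_forall ?_)
    intro y hy
    have h1 : 0 ≤ a * y ^ (-p) := by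
      have := Real.rpow_pos_of_pos (Set.mem_Ioi.mp hy) (-p)
      positivity
    have := Real.exp_le_one_iff.mpr (by linarith : -(a * y ^ (-p)) ≤ 0)
    simp only [hG]; linarith
  rw [integral_eq_lintegral_of_nonneg_ae hGnn hGm.aestronglyMeasurable.restrict]
  -- the 2-variable indicator function
  set F : ℝ → ℝ → ENNReal := fun y t =>
    Set.indicator {q : ℝ × ℝ | q.2 < a * q.1 ^ (-p)}
      (fun q => ENNReal.ofReal (Real.exp (-q.2))) (y, t) with hF
  have hstep1 : ∫⁻ y in Set.Ioi (0:ℝ), ENNReal.ofReal (G y)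
      = ∫⁻ y in Set.Ioi (0:ℝ), ∫⁻ t in Set.Ioi (0:ℝ), F y t := by
    refine (setLIntegral_congr_fun measurableSet_Ioi
      (fun y hy => ?_)).symm
    have hy0 : (0:ℝ) < y := hy
    have hM : 0 < a * y ^ (-p) := mul_pos ha (Real.rpow_pos_of_pos hy0 _)
    have : (fun t => F y t) = fun t =>
        (Set.Iio (a * y ^ (-p))).indicator (fun t => ENNReal.ofReal (Real.exp (-t))) t := by
      funext t
      simp only [hF, Set.indicator_apply, Set.mem_setOf_eq, Set.mem_Iio]
    rw [this, aux_strip _ hM]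
  rw [hstep1]
  have hmeasS : MeasurableSet {q : ℝ × ℝ | q.2 < a * q.1 ^ (-p)} := by
    apply measurableSet_lt measurable_snd
    fun_prop
  have hswap : ∫⁻ y in Set.Ioi (0:ℝ), ∫⁻ t in Set.Ioi (0:ℝ), F y t
      = ∫⁻ t in Set.Ioi (0:ℝ), ∫⁻ y in Set.Ioi (0:ℝ), F y t := by
    apply lintegral_lintegral_swap
    exact (Measurable.indicator (by fun_prop) hmeasS).aemeasurable
  rw [hswap]
  have hinner : ∀ t ∈ Set.Ioi (0:ℝ), ∫⁻ y in Set.Ioi (0:ℝ), F y t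
      = ENNReal.ofReal (Real.exp (-t) * (a/t) ^ (1/p)) := by
    intro t ht
    have ht0 : (0:ℝ) < t := ht
    set R : ℝ := (a/t) ^ (1/p) with hR
    have hR0 : 0 < R := Real.rpow_pos_of_pos (by positivity) _
    have hiff : ∀ y : ℝ, 0 < y → (t < a * y ^ (-p) ↔ y < R) := by
      intro y hy0
      have hyp : (0:ℝ) < y ^ p := Real.rpow_pos_of_pos hy0 _
      have h3 : R ^ p = a / t := by
        rw [hR, ← Real.rpow_mul (by positivity), one_div_mul_cancel hp0.ne', Real.rpow_one]
      rw [Real.rpow_neg hy0.le,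
        show a * (y ^ p)⁻¹ = a / y ^ p from (div_eq_mul_inv a _).symm,
        lt_div_iff₀ hyp, ← Real.rpow_lt_rpow_iff hy0.le hR0.le hp0, h3, lt_div_iff₀ ht0]
      constructor <;> intro h <;> linarith [mul_comm t (y ^ p)]
    have hrw : ∫⁻ y in Set.Ioi (0:ℝ), F y t = ∫⁻ y in Set.Ioi (0:ℝ),
        (Set.Ioo (0:ℝ) R).indicator (fun _ => ENNReal.ofReal (Real.exp (-t))) y := by
      refine setLIntegral_congr_fun measurableSet_Ioi (fun y hy => ?_)
      have hy0 : (0:ℝ) < y := hy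
      simp only [hF, Set.indicator_apply, Set.mem_setOf_eq, Set.mem_Ioo]
      simp [hiff y hy0, hy0]
    have hsub : Set.Ioo (0:ℝ) R ∩ Set.Ioi 0 = Set.Ioo 0 R :=
      Set.inter_eq_left.mpr (fun y hy => hy.1)
    rw [hrw, lintegral_indicator measurableSet_Ioo,
      Measure.restrict_restrict measurableSet_Ioo, hsub,
      setLIntegral_const, Real.volume_Ioo, sub_zero,
      ← ENNReal.ofReal_mul (Real.exp_pos _).le]
  rw [setLIntegral_congr_fun measurableSet_Ioi
    (fun t ht => hinner t ht)]
  have hre : ∀ t ∈ Set.Ioi (0:ℝ), Real.exp (-t) * (a/t) ^ (1/p)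
      = a ^ (1/p) * (Real.exp (-t) * t ^ ((1 - 1/p) - 1)) := by
    intro t ht
    have ht0 : (0:ℝ) < t := ht
    rw [show (1 - 1/p) - 1 = -(1/p) by ring,
      Real.div_rpow ha.le ht0.le, div_eq_mul_inv, ← Real.rpow_neg ht0.le]
    ring
  rw [setLIntegral_congr_fun measurableSet_Ioi
    (fun t ht => by rw [hre t ht])]
  have hInt2 : IntegrableOn (fun t : ℝ =>
      a ^ (1/p) * (Real.exp (-t) * t ^ ((1 - 1/p) - 1))) (Set.Ioi 0) :=
    (Real.GammaIntegral_convergent hs).const_mul _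
  have hnn2 : ∀ᵐ t ∂(volume.restrict (Set.Ioi (0:ℝ))),
      0 ≤ a ^ (1/p) * (Real.exp (-t) * t ^ ((1 - 1/p) - 1)) := by
    refine (ae_restrict_iff' measurableSet_Ioi).mpr (Filter.Eventually.of_forall ?_)
    intro t ht
    have ht0 : (0:ℝ) < t := ht
    positivity
  rw [← ofReal_integral_eq_lintegral_ofReal hInt2 hnn2, integral_const_mul,
    ← Real.Gamma_eq_integral hs, ENNReal.toReal_ofReal (by positivity)]
open MeasureTheory Filter Real Topology Set

lemma aux_mom (f : ℝ → ℝ) (c β : ℝ) (hc : 0 < c) (hβ : 0 < β)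
    (hf_cont : ContinuousOn f (Set.Icc (0:ℝ) 1))
    (hf_nonneg : ∀ x ∈ Set.Icc (0:ℝ) 1, 0 ≤ f x)
    (hf_lim : Tendsto (fun x : ℝ => f x / (1 - x) ^ β) (nhdsWithin 1 (Set.Iio 1)) (𝓝 c)) :
    Tendsto (fun j : ℕ => (j:ℝ) ^ (β+1) * ∫ x in Set.Icc (0:ℝ) 1, x ^ j * f x) atTop
      (𝓝 (c * Real.Gamma (β+1))) := by
  -- global bound for f
  obtain ⟨B, hB⟩ := isCompact_Icc.exists_bound_of_continuousOn hf_cont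
  have hB0 : 0 ≤ B := le_trans (norm_nonneg _) (hB 0 (by norm_num))
  -- threshold x0
  have hev : ∀ᶠ x in nhdsWithin 1 (Set.Iio 1), f x / (1-x)^β < c + 1 :=
    hf_lim.eventually (eventually_lt_nhds (lt_add_one c))
  rw [eventually_iff, mem_nhdsLT_iff_exists_Ioo_subset] at hev
  obtain ⟨x0', hx0', hsub⟩ := hev
  set x0 : ℝ := max x0' 0 with hx0def
  have hx01 : x0 < 1 := max_lt hx0' one_pos
  have hx00 : 0 ≤ x0 := le_max_right _ _
  have hx0lt : ∀ x ∈ Set.Ioo x0 1, f x < (c+1) * (1-x)^β := by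
    intro x hx
    have hx' : x ∈ Set.Ioo x0' 1 := ⟨lt_of_le_of_lt (le_max_left _ _) hx.1, hx.2⟩
    have h1 : f x / (1-x)^β < c + 1 := hsub hx'
    have h2 : (0:ℝ) < (1-x)^β := Real.rpow_pos_of_pos (by linarith [hx.2]) _
    calc f x = (f x / (1-x)^β) * (1-x)^β := by field_simp
    _ < (c+1) * (1-x)^β := by apply mul_lt_mul_of_pos_right h1 h2
  set M : ℝ := max (c+1) (B * (1-x0)^(-β)) with hMdef
  have hM0 : 0 < M := lt_of_lt_of_le (by linarith) (le_max_left _ _)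
  set bound : ℝ → ℝ := fun u => M * (Real.exp (-u) * u ^ β) with hbdef
  have hbound_int : IntegrableOn bound (Set.Ioi 0) := by
    have := (Real.GammaIntegral_convergent (by linarith : (0:ℝ) < β + 1)).const_mul M
    simp at this
    exact this
  set F : ℕ → ℝ → ℝ := fun j u => Set.indicator (Set.Ioc 0 (j:ℝ))
    (fun u => (j:ℝ)^β * ((1 - u/j)^j * f (1 - u/j))) u with hFdef
  -- identity
  have hid : ∀ j : ℕ, 1 ≤ j →
      (j:ℝ) ^ (β+1) * ∫ x in Set.Icc (0:ℝ) 1, x ^ j * f x = ∫ u in Set.Ioi 0, F j u := by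
    intro j hj
    have hj0 : (0:ℝ) < j := by exact_mod_cast hj
    have e1 : ∫ x in Set.Icc (0:ℝ) 1, x ^ j * f x = ∫ x in (0:ℝ)..1, x ^ j * f x := by
      rw [MeasureTheory.integral_Icc_eq_integral_Ioc, intervalIntegral.integral_of_le zero_le_one]
    have e2 : ∫ x in (0:ℝ)..1, x ^ j * f x = ∫ x in (0:ℝ)..1, (1-x) ^ j * f (1-x) := by
      have := intervalIntegral.integral_comp_sub_left (a := 0) (b := 1)
        (fun x => x ^ j * f x) 1
      simp only [sub_zero, sub_self] at this
      rw [← this]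
    have e3 : ∫ x in (0:ℝ)..1, (1-x) ^ j * f (1-x)
        = (j:ℝ)⁻¹ * ∫ u in (0:ℝ)..(j:ℝ), (1 - u/j) ^ j * f (1 - u/j) := by
      have := intervalIntegral.integral_comp_div (a := 0) (b := (j:ℝ))
        (fun x => (1-x) ^ j * f (1-x)) hj0.ne'
      rw [this]
      simp only [zero_div, div_self hj0.ne', smul_eq_mul]
      rw [← mul_assoc, inv_mul_cancel₀ hj0.ne', one_mul]
    have e4 : ∫ u in (0:ℝ)..(j:ℝ), (1 - u/j) ^ j * f (1 - u/j)
        = ∫ u in Set.Ioc (0:ℝ) (j:ℝ), (1 - u/j) ^ j * f (1 - u/j) :=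
      intervalIntegral.integral_of_le hj0.le
    have e5 : ∫ u in Set.Ioi (0:ℝ), F j u
        = ∫ u in Set.Ioc (0:ℝ) (j:ℝ), (j:ℝ)^β * ((1 - u/j)^j * f (1 - u/j)) := by
      rw [hFdef]
      rw [MeasureTheory.integral_indicator measurableSet_Ioc,
        Measure.restrict_restrict measurableSet_Ioc,
        Set.inter_eq_left.mpr (Set.Ioc_subset_Ioi_self)]
    rw [e1, e2, e3, e4, e5, MeasureTheory.integral_const_mul]
    rw [show (j:ℝ) ^ (β+1) = (j:ℝ)^β * (j:ℝ) by
      rw [Real.rpow_add hj0, Real.rpow_one]]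
    field_simp
  -- measurability
  have hmeas : ∀ j : ℕ, AEStronglyMeasurable (F j) (volume.restrict (Set.Ioi 0)) := by
    intro j
    have hcont : ContinuousOn (fun u : ℝ => (j:ℝ)^β * ((1 - u/j)^j * f (1 - u/j)))
        (Set.Ioc 0 (j:ℝ)) := by
      rcases Nat.eq_zero_or_pos j with h0 | hj
      · subst h0
        norm_num
      · have hj0 : (0:ℝ) < j := by exact_mod_cast hj
        have hmap : Set.MapsTo (fun u : ℝ => 1 - u/j) (Set.Ioc 0 (j:ℝ)) (Set.Icc 0 1) := by
          intro u hu
          have h1 : u / (j:ℝ) ≤ 1 := (div_le_one hj0).mpr hu.2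
          have h2 : 0 < u / (j:ℝ) := div_pos hu.1 hj0
          exact ⟨by linarith, by linarith⟩
        have hcf : ContinuousOn (fun u : ℝ => f (1 - u/j)) (Set.Ioc 0 (j:ℝ)) :=
          hf_cont.comp ((continuous_const.sub (continuous_id.div_const _)).continuousOn) hmap
        exact continuousOn_const.mul
          ((((continuous_const.sub (continuous_id.div_const _)).pow j).continuousOn).mul hcf)
    have h2 := hcont.aestronglyMeasurable (μ := volume) measurableSet_Ioc
    apply (aestronglyMeasurable_indicator_iff measurableSet_Ioc).mpr
    rw [Measure.restrict_restrict measurableSet_Ioc,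
      Set.inter_eq_left.mpr Set.Ioc_subset_Ioi_self]
    exact h2
  -- bound
  have hFb : ∀ j : ℕ, 1 ≤ j → ∀ u ∈ Set.Ioi (0:ℝ), ‖F j u‖ ≤ bound u := by
    intro j hj u hu
    have hu0 : (0:ℝ) < u := hu
    have hbnn : 0 ≤ bound u := by
      have := hu0.le
      positivity
    by_cases hmem : u ∈ Set.Ioc (0:ℝ) (j:ℝ)
    · have hj0 : (0:ℝ) < j := lt_of_lt_of_le hu0 hmem.2
      have hx0 : 0 ≤ 1 - u/(j:ℝ) := by
        have := (div_le_one hj0).mpr hmem.2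
        linarith
      have hx1 : 1 - u/(j:ℝ) < 1 := by
        have : 0 < u/(j:ℝ) := div_pos hu0 hj0
        linarith
      have hfx0 : 0 ≤ f (1 - u/(j:ℝ)) := hf_nonneg _ ⟨hx0, hx1.le⟩
      have hFval : F j u = (j:ℝ)^β * ((1 - u/j)^j * f (1 - u/(j:ℝ))) :=
        Set.indicator_of_mem hmem _
      have hpow : (1 - u/(j:ℝ))^j ≤ Real.exp (-u) := by
        have h1 : 1 - u/(j:ℝ) ≤ Real.exp (-(u/j)) := by
          linarith [Real.add_one_le_exp (-(u/(j:ℝ)))]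
        calc (1-u/(j:ℝ))^j ≤ (Real.exp (-(u/j)))^j := pow_le_pow_left₀ hx0 h1 j
        _ = Real.exp (-u) := by
          rw [← Real.exp_nat_mul]
          congr 1
          field_simp
      have hFnn : 0 ≤ F j u := by
        rw [hFval]
        exact mul_nonneg (Real.rpow_nonneg hj0.le _)
          (mul_nonneg (pow_nonneg hx0 _) hfx0)
      rw [Real.norm_eq_abs, abs_of_nonneg hFnn, hFval]
      rcases lt_or_ge x0 (1 - u/(j:ℝ)) with hcase | hcase
      · have hflt : f (1 - u/(j:ℝ)) ≤ (c+1) * (1-(1 - u/(j:ℝ)))^β :=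
          (hx0lt _ ⟨hcase, hx1⟩).le
        have h1x : (1:ℝ) - (1 - u/(j:ℝ)) = u/j := by ring
        rw [h1x] at hflt
        have key : (j:ℝ)^β * (u/j)^β = u^β := by
          rw [← Real.mul_rpow hj0.le (div_nonneg hu0.le hj0.le)]
          congr 1
          field_simp
        calc (j:ℝ)^β * ((1 - u/j)^j * f (1 - u/(j:ℝ)))
            ≤ (j:ℝ)^β * (Real.exp (-u) * ((c+1) * (u/j)^β)) := by
              apply mul_le_mul_of_nonneg_left _ (Real.rpow_nonneg hj0.le _)
              exact mul_le_mul hpow hflt hfx0 (Real.exp_pos _).le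
          _ = (c+1) * (Real.exp (-u) * ((j:ℝ)^β * (u/j)^β)) := by ring
          _ = (c+1) * (Real.exp (-u) * u^β) := by rw [key]
          _ ≤ M * (Real.exp (-u) * u^β) := by
              apply mul_le_mul_of_nonneg_right (le_max_left _ _)
              have := hu0.le
              positivity
      · have hfB : f (1 - u/(j:ℝ)) ≤ B := by
          have := hB _ ⟨hx0, hx1.le⟩
          rw [Real.norm_eq_abs] at this
          linarith [le_abs_self (f (1 - u/(j:ℝ)))]
        have hju : (j:ℝ) ≤ u / (1 - x0) := by
          have h2 : 1 - x0 ≤ u/(j:ℝ) := by linarith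
          rw [le_div_iff₀ (by linarith : (0:ℝ) < 1 - x0)]
          calc (j:ℝ) * (1-x0) ≤ (j:ℝ) * (u/j) := mul_le_mul_of_nonneg_left h2 hj0.le
          _ = u := by field_simp
        have hjb : (j:ℝ)^β ≤ (u/(1-x0))^β := Real.rpow_le_rpow hj0.le hju hβ.le
        have hsplit : (u/(1-x0))^β = u^β * (1-x0)^(-β) := by
          rw [Real.div_rpow hu0.le (by linarith), Real.rpow_neg (by linarith), div_eq_mul_inv]
        calc (j:ℝ)^β * ((1-u/j)^j * f (1 - u/(j:ℝ)))
            ≤ (u/(1-x0))^β * (Real.exp (-u) * B) := by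
              apply mul_le_mul hjb (mul_le_mul hpow hfB hfx0 (Real.exp_pos _).le)
                (mul_nonneg (pow_nonneg hx0 _) hfx0)
                (Real.rpow_nonneg (div_nonneg hu0.le (by linarith)) _)
          _ = (B * (1-x0)^(-β)) * (Real.exp (-u) * u^β) := by rw [hsplit]; ring
          _ ≤ M * (Real.exp (-u) * u^β) := by
              apply mul_le_mul_of_nonneg_right (le_max_right _ _)
              have := hu0.le
              positivity
    · rw [hFdef]
      simp only [Set.indicator_of_notMem hmem, norm_zero]
      exact hbnn
  -- pointwise limit
  have hlim : ∀ u ∈ Set.Ioi (0:ℝ), Tendsto (fun j : ℕ => F j u) atTop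
      (𝓝 (c * (Real.exp (-u) * u^β))) := by
    intro u hu
    have hu0 : (0:ℝ) < u := hu
    have h1 : Tendsto (fun j : ℕ => (1 - u/(j:ℝ))^j) atTop (𝓝 (Real.exp (-u))) := by
      have h := Real.tendsto_one_add_div_pow_exp (-u)
      refine h.congr fun n => ?_
      congr 1
      ring
    have h2 : Tendsto (fun j : ℕ => 1 - u/(j:ℝ)) atTop (nhdsWithin 1 (Set.Iio 1)) := by
      rw [tendsto_nhdsWithin_iff]
      constructor
      · have h3 : Tendsto (fun j : ℕ => u/(j:ℝ)) atTop (𝓝 0) :=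
          tendsto_const_div_atTop_nhds_zero_nat u
        simpa using tendsto_const_nhds.sub h3
      · filter_upwards [eventually_ge_atTop 1] with j hj
        have hj0 : (0:ℝ) < j := by exact_mod_cast hj
        have : 0 < u/(j:ℝ) := div_pos hu0 hj0
        simp only [Set.mem_Iio]
        linarith
    have h3 : Tendsto (fun j : ℕ => f (1 - u/(j:ℝ)) / (u/(j:ℝ))^β) atTop (𝓝 c) := by
      have h4 := hf_lim.comp h2
      refine h4.congr fun j => ?_
      simp only [Function.comp]
      congr 2
      ring
    have h4 : Tendsto (fun j : ℕ => ((1 - u/(j:ℝ))^j * (f (1 - u/(j:ℝ)) / (u/(j:ℝ))^β)) * u^β)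
        atTop (𝓝 ((Real.exp (-u) * c) * u^β)) := (h1.mul h3).mul_const _
    have h5 : (Real.exp (-u) * c) * u^β = c * (Real.exp (-u) * u^β) := by ring
    rw [h5] at h4
    refine h4.congr' ?_
    filter_upwards [eventually_gt_atTop ⌈u⌉₊] with j hj
    have hju : u < (j:ℝ) := lt_of_le_of_lt (Nat.le_ceil u) (by exact_mod_cast hj)
    have hj0 : (0:ℝ) < j := lt_trans hu0 hju
    have hmem : u ∈ Set.Ioc 0 (j:ℝ) := ⟨hu0, hju.le⟩
    rw [hFdef]
    simp only [Set.indicator_of_mem hmem]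
    have huj : (0:ℝ) < u/(j:ℝ) := div_pos hu0 hj0
    have hne : ((u/(j:ℝ)))^β ≠ 0 := (Real.rpow_pos_of_pos huj β).ne'
    have key : (j:ℝ)^β * (u/(j:ℝ))^β = u^β := by
      rw [← Real.mul_rpow hj0.le huj.le]
      congr 1
      field_simp
    rw [← key]
    field_simp
  -- DCT
  have hDCT := MeasureTheory.tendsto_integral_filter_of_dominated_convergence bound
    (Filter.Eventually.of_forall hmeas)
    (by
      filter_upwards [eventually_ge_atTop 1] with j hj
      exact (ae_restrict_iff' measurableSet_Ioi).mpr (Filter.Eventually.of_forall (hFb j hj)))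
    hbound_int
    ((ae_restrict_iff' measurableSet_Ioi).mpr (Filter.Eventually.of_forall hlim))
  have hval : ∫ u in Set.Ioi (0:ℝ), c * (Real.exp (-u) * u^β) = c * Real.Gamma (β+1) := by
    rw [MeasureTheory.integral_const_mul, Real.Gamma_eq_integral (by linarith : (0:ℝ) < β+1)]
    norm_num
  rw [hval] at hDCT
  refine hDCT.congr' ?_
  filter_upwards [eventually_ge_atTop 1] with j hj
  exact (hid j hj).symm


end AuxLemmas

/-- Let `μ` be a probability measure on `[0,1]` with
continuous density `f` with respect to Lebesgue measure, and suppose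
`f(x)/(1-x)^β → c > 0` as `x → 1⁻`, with `β > 0`.  Then, with
`ζ_μ(k) = ∑_{j≥1} (m j)^k` the moment zeta function (`m j` the `j`-th moment),
`n^(-1/(1+β)) ∑_{k=1}^n (-1)^k C(n,k) ζ_μ(k)
  → -(c Γ(β+1))^(1/(β+1)) Γ(β/(β+1))` as `n → ∞`. -/
theorem stmt_10 (f : ℝ → ℝ) (c β : ℝ) (hc : 0 < c) (hβ : 0 < β)
    (hf_cont : ContinuousOn f (Set.Icc (0 : ℝ) 1))
    (hf_nonneg : ∀ x ∈ Set.Icc (0 : ℝ) 1, 0 ≤ f x)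
    (hf_prob : ∫ x in Set.Icc (0 : ℝ) 1, f x = 1)
    (hf_lim : Tendsto (fun x : ℝ => f x / (1 - x) ^ β)
      (nhdsWithin 1 (Set.Iio 1)) (𝓝 c))
    (m : ℕ → ℝ) (hm : ∀ j, m j = ∫ x in Set.Icc (0 : ℝ) 1, x ^ j * f x) :
    Tendsto (fun n : ℕ => (n : ℝ) ^ (-(1 / (1 + β))) *
        ∑ k ∈ Icc 1 n, (-1 : ℝ) ^ k * (n.choose k : ℝ) * ∑' j : ℕ, m (j + 1) ^ k)
      atTop
      (𝓝 (-((c * Real.Gamma (β + 1)) ^ (1 / (β + 1))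
        * Real.Gamma (β / (β + 1))))) := by
  set p : ℝ := β + 1 with hpdef
  have hp1 : (1:ℝ) < p := by rw [hpdef]; linarith
  have hp0 : (0:ℝ) < p := by linarith
  set a : ℝ := c * Real.Gamma (β + 1) with hadef
  have ha0 : 0 < a := mul_pos hc (Real.Gamma_pos_of_pos (by linarith))
  have hasym : Tendsto (fun j : ℕ => (j:ℝ)^p * m j) atTop (𝓝 a) := by
    have h := aux_mom f c β hc hβ hf_cont hf_nonneg hf_lim
    exact h.congr fun j => by rw [hm j]
  have hfint : IntegrableOn f (Set.Icc (0:ℝ) 1) := hf_cont.integrableOn_compact isCompact_Icc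
  have hjint : ∀ j : ℕ, IntegrableOn (fun x => x ^ j * f x) (Set.Icc (0:ℝ) 1) := fun j =>
    (((continuous_pow j).continuousOn).mul hf_cont).integrableOn_compact isCompact_Icc
  have hm0 : ∀ j, 0 ≤ m j := by
    intro j; rw [hm j]
    apply MeasureTheory.setIntegral_nonneg measurableSet_Icc
    intro x hx; exact mul_nonneg (pow_nonneg hx.1 _) (hf_nonneg x hx)
  have hm1 : ∀ j, m j ≤ 1 := by
    intro j
    have hle : ∫ x in Set.Icc (0:ℝ) 1, x ^ j * f x ≤ ∫ x in Set.Icc (0:ℝ) 1, f x := by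
      apply MeasureTheory.setIntegral_mono_on (hjint j) hfint measurableSet_Icc
      intro x hx
      calc x ^ j * f x ≤ 1 * f x :=
        mul_le_mul_of_nonneg_right (pow_le_one₀ hx.1 hx.2) (hf_nonneg x hx)
      _ = f x := one_mul _
    rw [hm j]
    rw [hf_prob] at hle
    exact hle
  -- uniform bound on moments
  obtain ⟨C, hC1, hC⟩ : ∃ C : ℝ, 1 ≤ C ∧ ∀ k : ℕ, 1 ≤ k → (k:ℝ)^p * m k ≤ C := by
    have hev : ∀ᶠ j : ℕ in atTop, (j:ℝ)^p * m j ≤ a + 1 :=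
      hasym.eventually (eventually_le_nhds (lt_add_one a))
    obtain ⟨N, hN⟩ := eventually_atTop.mp hev
    refine ⟨max (a+1) ((N:ℝ)^p) + 1, ?_, ?_⟩
    · have h0 : (0:ℝ) ≤ max (a+1) ((N:ℝ)^p) := le_trans (by linarith) (le_max_left _ _)
      linarith
    intro k hk
    rcases le_or_gt N k with h | h
    · calc (k:ℝ)^p * m k ≤ a + 1 := hN k h
      _ ≤ _ := by
        have := le_max_left (a+1) ((N:ℝ)^p); linarith
    · have hk0 : (0:ℝ) < k := by exact_mod_cast hk
      have s1 : (k:ℝ)^p * m k ≤ (k:ℝ)^p * 1 :=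
        mul_le_mul_of_nonneg_left (hm1 k) (Real.rpow_nonneg hk0.le _)
      have s2 : (k:ℝ)^p ≤ (N:ℝ)^p := Real.rpow_le_rpow hk0.le (by exact_mod_cast h.le) hp0.le
      have s3 := le_max_right (a+1) ((N:ℝ)^p)
      linarith
  have hC0 : (0:ℝ) < C := lt_of_lt_of_le one_pos hC1
  have hmle : ∀ k : ℕ, 1 ≤ k → m k ≤ C * (k:ℝ)^(-p) := by
    intro k hk
    have hk0 : (0:ℝ) < k := by exact_mod_cast hk
    have h1 : (0:ℝ) < (k:ℝ)^p := Real.rpow_pos_of_pos hk0 _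
    have h2 := hC k hk
    rw [Real.rpow_neg hk0.le]
    calc m k = ((k:ℝ)^p * m k) * ((k:ℝ)^p)⁻¹ := by field_simp
    _ ≤ C * ((k:ℝ)^p)⁻¹ := mul_le_mul_of_nonneg_right h2 (by positivity)
  -- summability facts
  have hsum_m : Summable (fun j : ℕ => m (j+1)) := by
    have h0 : Summable (fun j : ℕ => ((j:ℝ))^(-p)) :=
      Real.summable_nat_rpow.mpr (by linarith)
    have h1 : Summable (fun j : ℕ => C * (((j+1:ℕ)):ℝ)^(-p)) :=
      (((summable_nat_add_iff 1).mpr h0)).mul_left C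
    apply Summable.of_nonneg_of_le (fun j => hm0 _) (fun j => ?_) h1
    exact hmle (j+1) (by omega)
  have hsum_k : ∀ k : ℕ, 1 ≤ k → Summable (fun j : ℕ => m (j+1) ^ k) := by
    intro k hk
    apply Summable.of_nonneg_of_le (fun j => pow_nonneg (hm0 _) _) (fun j => ?_) hsum_m
    exact pow_le_of_le_one (hm0 _) (hm1 _) (by omega)
  have hsum_pow : ∀ n : ℕ, Summable (fun j : ℕ => (1 - (1 - m (j+1))^n)) := by
    intro n
    apply Summable.of_nonneg_of_le (fun j => ?_) (fun j => ?_) (hsum_m.mul_left (n:ℝ))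
    · have h1 : (1 - m (j+1))^n ≤ 1 :=
        pow_le_one₀ (by linarith [hm1 (j+1)]) (by linarith [hm0 (j+1)])
      linarith
    · have h2 := one_add_mul_le_pow (a := -(m (j+1))) (by linarith [hm1 (j+1)]) n
      have h3 : (1 + (n:ℝ) * (-(m (j+1)))) ≤ (1 - m (j+1))^n := by
        linarith [h2, show (1 - m (j+1))^n = (1 + -m (j+1))^n by ring]
      nlinarith [hm0 (j+1)]
  -- rewrite of the inner finite sum
  have hrw : ∀ n : ℕ, 1 ≤ n →
      (∑ k ∈ Icc 1 n, (-1:ℝ)^k * (n.choose k : ℝ) * ∑' j : ℕ, m (j+1)^k)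
      = -∑' j : ℕ, (1 - (1 - m (j+1))^n) := by
    intro n hn
    have h1 : ∀ k ∈ Icc 1 n, Summable (fun j : ℕ => (-1:ℝ)^k * (n.choose k : ℝ) * m (j+1)^k) :=
      fun k hk => (hsum_k k (mem_Icc.mp hk).1).mul_left _
    have e1 : (∑ k ∈ Icc 1 n, (-1:ℝ)^k * (n.choose k : ℝ) * ∑' j : ℕ, m (j+1)^k)
        = ∑' j : ℕ, ∑ k ∈ Icc 1 n, (-1:ℝ)^k * (n.choose k : ℝ) * m (j+1)^k := by
      rw [Summable.tsum_finsetSum h1]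
      exact Finset.sum_congr rfl fun k hk => (tsum_mul_left).symm
    rw [e1]
    have e2 : ∀ j : ℕ, (∑ k ∈ Icc 1 n, (-1:ℝ)^k * (n.choose k : ℝ) * m (j+1)^k)
        = -(1 - (1 - m (j+1))^n) := by
      intro j
      set x : ℝ := m (j+1)
      have hb : (1 - x)^n = ∑ k ∈ Finset.range (n+1), (-x)^k * 1^(n-k) * (n.choose k) := by
        rw [← add_pow]; congr 1; ring
      have hsplit : Finset.range (n+1) \ {0} = Icc 1 n := by
        ext k
        simp only [Finset.mem_sdiff, Finset.mem_range, Finset.mem_singleton, Finset.mem_Icc]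
        omega
      have h0mem : (0:ℕ) ∈ Finset.range (n+1) := by simp
      have := Finset.sum_eq_sum_sdiff_singleton_add h0mem
        (fun k => (-x)^k * 1^(n-k) * (n.choose k : ℝ))
      rw [this, hsplit] at hb
      simp only [pow_zero, one_pow, Nat.choose_zero_right, Nat.cast_one, mul_one, one_mul] at hb
      have : ∑ k ∈ Icc 1 n, (-1:ℝ)^k * (n.choose k : ℝ) * x^k
          = ∑ k ∈ Icc 1 n, (-x)^k * 1^(n-k) * (n.choose k : ℝ) := by
        refine Finset.sum_congr rfl fun k hk => ?_
        rw [neg_pow, one_pow]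
        ring
      rw [this]
      simp only [one_pow, mul_one]
      linarith
    calc ∑' j : ℕ, ∑ k ∈ Icc 1 n, (-1:ℝ)^k * (n.choose k : ℝ) * m (j+1)^k
        = ∑' j : ℕ, -(1 - (1 - m (j+1))^n) := tsum_congr e2
      _ = -∑' j : ℕ, (1 - (1 - m (j+1))^n) := tsum_neg
  -- the rescaled step functions
  set Fn : ℕ → ℝ → ℝ := fun n y => 1 - (1 - m (⌈y * (n:ℝ)^(1/p)⌉₊))^n with hFndef
  have hs0 : ∀ n : ℕ, 1 ≤ n → (0:ℝ) < (n:ℝ)^(1/p) := fun n hn =>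
    Real.rpow_pos_of_pos (by exact_mod_cast hn) _
  have hsp : ∀ n : ℕ, ((n:ℝ)^(1/p))^p = (n:ℝ) := by
    intro n
    rw [← Real.rpow_mul (Nat.cast_nonneg n), one_div_mul_cancel hp0.ne', Real.rpow_one]
  -- bound
  have hFnb : ∀ n : ℕ, 1 ≤ n → ∀ y ∈ Set.Ioi (0:ℝ), ‖Fn n y‖ ≤ min 1 (C * y^(-p)) := by
    intro n hn y hy
    have hy0 : (0:ℝ) < y := hy
    have hsn := hs0 n hn
    set s := (n:ℝ)^(1/p)
    set k := ⌈y*s⌉₊ with hkdef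
    have hys : 0 < y*s := mul_pos hy0 hsn
    have hk1 : 1 ≤ k := Nat.one_le_ceil_iff.mpr hys
    have hkr : (0:ℝ) < k := by exact_mod_cast hk1
    have hFn1 : Fn n y ≤ 1 := by
      have h1 : (0:ℝ) ≤ (1 - m k)^n := pow_nonneg (by linarith [hm1 k]) _
      simp only [hFndef]
      linarith
    have hFn0 : 0 ≤ Fn n y := by
      have h1 : (1 - m k)^n ≤ 1 := pow_le_one₀ (by linarith [hm1 k]) (by linarith [hm0 k])
      simp only [hFndef]
      linarith
    rw [Real.norm_eq_abs, abs_of_nonneg hFn0]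
    refine le_min hFn1 ?_
    have step1 : Fn n y ≤ (n:ℝ) * m k := by
      have h2 := one_add_mul_le_pow (a := -(m k)) (by linarith [hm1 k]) n
      have h3 : (1 + (n:ℝ) * (-(m k))) ≤ (1 - m k)^n := by
        linarith [h2, show (1 - m k)^n = (1 + -m k)^n by ring]
      simp only [hFndef]
      linarith
    have step2 : m k ≤ C * (k:ℝ)^(-p) := hmle k hk1
    have step3 : (k:ℝ)^(-p) ≤ (y*s)^(-p) := by
      have h2 : (y*s)^p ≤ (k:ℝ)^p := Real.rpow_le_rpow hys.le (Nat.le_ceil _) hp0.le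
      rw [Real.rpow_neg hys.le, Real.rpow_neg hkr.le]
      exact inv_anti₀ (Real.rpow_pos_of_pos hys _) h2
    have step4 : (y*s)^(-p) = y^(-p) * s^(-p) := Real.mul_rpow hy0.le hsn.le
    have step5 : (n:ℝ) * s^(-p) = 1 := by
      rw [Real.rpow_neg hsn.le, hsp n]
      have hn0 : (0:ℝ) < n := by exact_mod_cast hn
      field_simp
    calc Fn n y ≤ (n:ℝ) * m k := step1
      _ ≤ (n:ℝ) * (C * (k:ℝ)^(-p)) := by
        apply mul_le_mul_of_nonneg_left step2 (by positivity)
      _ ≤ (n:ℝ) * (C * (y^(-p) * s^(-p))) := by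
        apply mul_le_mul_of_nonneg_left _ (by positivity)
        apply mul_le_mul_of_nonneg_left _ hC0.le
        rw [← step4]
        exact step3
      _ = C * y^(-p) * ((n:ℝ) * s^(-p)) := by ring
      _ = C * y^(-p) := by rw [step5, mul_one]
  -- measurability
  have hFnmeas : ∀ n : ℕ, AEStronglyMeasurable (Fn n) (volume.restrict (Set.Ioi 0)) := by
    intro n
    have hmono : Monotone (fun y : ℝ => ⌈y * (n:ℝ)^(1/p)⌉₊) := fun y z hyz =>
      Nat.ceil_mono (mul_le_mul_of_nonneg_right hyz (Real.rpow_nonneg (Nat.cast_nonneg n) _))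
    exact ((measurable_from_top (f := fun k : ℕ => 1 - (1 - m k)^n)).comp
      hmono.measurable).aestronglyMeasurable.restrict
  have hFnint : ∀ n : ℕ, 1 ≤ n → IntegrableOn (Fn n) (Set.Ioi 0) := fun n hn =>
    Integrable.mono' (aux_bound C p hC0.le hp1) (hFnmeas n)
      ((ae_restrict_iff' measurableSet_Ioi).mpr (Filter.Eventually.of_forall (hFnb n hn)))
  -- representation of the series as an integral
  have hrep : ∀ n : ℕ, 1 ≤ n → (n:ℝ)^(-(1/(1+β))) * ∑' j : ℕ, (1 - (1 - m (j+1))^n)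
      = ∫ y in Set.Ioi (0:ℝ), Fn n y := by
    intro n hn
    have hsn := hs0 n hn
    set s := (n:ℝ)^(1/p) with hsdef
    have hexp : (n:ℝ)^(-(1/(1+β))) = s⁻¹ := by
      rw [show -(1/(1+β)) = -(1/p) by rw [hpdef, add_comm], Real.rpow_neg (Nat.cast_nonneg n)]
    have hcover : Set.Ioi (0:ℝ) = ⋃ j : ℕ, Set.Ioc ((j:ℝ)/s) (((j:ℝ)+1)/s) := by
      ext y
      simp only [Set.mem_Ioi, Set.mem_iUnion, Set.mem_Ioc]
      constructor
      · intro hy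
        have hys : 0 < y*s := mul_pos hy hsn
        have hk1 : 1 ≤ ⌈y*s⌉₊ := Nat.one_le_ceil_iff.mpr hys
        refine ⟨⌈y*s⌉₊ - 1, ?_, ?_⟩
        · rw [div_lt_iff₀ hsn]
          have h1 : (⌈y*s⌉₊:ℝ) < y*s + 1 := Nat.ceil_lt_add_one hys.le
          have hcast : ((⌈y*s⌉₊ - 1 : ℕ):ℝ) = (⌈y*s⌉₊:ℝ) - 1 := by
            push_cast [hk1]
            ring
          rw [hcast]
          linarith
        · rw [le_div_iff₀ hsn]
          have hcast : ((⌈y*s⌉₊ - 1 : ℕ):ℝ) = (⌈y*s⌉₊:ℝ) - 1 := by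
            push_cast [hk1]
            ring
          rw [hcast]
          have := Nat.le_ceil (y*s)
          linarith
      · rintro ⟨j, hj1, hj2⟩
        have h0 : (0:ℝ) ≤ (j:ℝ)/s := div_nonneg (Nat.cast_nonneg j) hsn.le
        linarith
    have hdisj : Pairwise (Function.onFun Disjoint
        fun j : ℕ => Set.Ioc ((j:ℝ)/s) (((j:ℝ)+1)/s)) := by
      intro i j hij
      have key : ∀ i j : ℕ, i < j → Disjoint (Set.Ioc ((i:ℝ)/s) (((i:ℝ)+1)/s))
          (Set.Ioc ((j:ℝ)/s) (((j:ℝ)+1)/s)) := by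
        intro i j h
        rw [Set.Ioc_disjoint_Ioc]
        have h1 : ((i:ℝ)+1)/s ≤ (j:ℝ)/s := by
          apply (div_le_div_iff_of_pos_right hsn).mpr
          exact_mod_cast h
        calc min (((i:ℝ)+1)/s) (((j:ℝ)+1)/s) ≤ ((i:ℝ)+1)/s := min_le_left _ _
          _ ≤ (j:ℝ)/s := h1
          _ ≤ max ((i:ℝ)/s) ((j:ℝ)/s) := le_max_right _ _
      rcases lt_or_gt_of_ne hij with h | h
      · exact key i j h
      · exact (key j i h).symm
    have hconst : ∀ j : ℕ, ∫ y in Set.Ioc ((j:ℝ)/s) (((j:ℝ)+1)/s), Fn n y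
        = (1 - (1 - m (j+1))^n) * (1/s) := by
      intro j
      have hceil : ∀ y ∈ Set.Ioc ((j:ℝ)/s) (((j:ℝ)+1)/s), ⌈y*s⌉₊ = j+1 := by
        intro y hy
        have h1 : (j:ℝ) < y*s := (div_lt_iff₀ hsn).mp hy.1
        have h2 : y*s ≤ (j:ℝ)+1 := by
          have := hy.2
          rw [le_div_iff₀ hsn] at this
          linarith
        rw [Nat.ceil_eq_iff (by omega : j+1 ≠ 0)]
        constructor
        · push_cast
          simpa using h1
        · push_cast
          linarith
      have heq : ∫ y in Set.Ioc ((j:ℝ)/s) (((j:ℝ)+1)/s), Fn n y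
          = ∫ _ in Set.Ioc ((j:ℝ)/s) (((j:ℝ)+1)/s), (1 - (1 - m (j+1))^n) := by
        apply MeasureTheory.setIntegral_congr_fun measurableSet_Ioc
        intro y hy
        simp only [hFndef]
        rw [hceil y hy]
      rw [heq, MeasureTheory.setIntegral_const, Real.volume_real_Ioc, smul_eq_mul]
      have hlen : ((j:ℝ)+1)/s - (j:ℝ)/s = 1/s := by field_simp; ring
      rw [hlen, max_eq_left (by positivity)]
      ring
    calc (n:ℝ)^(-(1/(1+β))) * ∑' j : ℕ, (1 - (1 - m (j+1))^n)
        = ∑' j : ℕ, (1 - (1 - m (j+1))^n) * (1/s) := by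
          rw [hexp, tsum_mul_right, one_div]
          ring
      _ = ∑' j : ℕ, ∫ y in Set.Ioc ((j:ℝ)/s) (((j:ℝ)+1)/s), Fn n y :=
          tsum_congr fun j => (hconst j).symm
      _ = ∫ y in ⋃ j : ℕ, Set.Ioc ((j:ℝ)/s) (((j:ℝ)+1)/s), Fn n y :=
          (MeasureTheory.integral_iUnion (fun j => measurableSet_Ioc) hdisj
            (hcover ▸ hFnint n hn)).symm
      _ = ∫ y in Set.Ioi 0, Fn n y := by rw [← hcover]
  -- pointwise limit
  have hptw : ∀ y ∈ Set.Ioi (0:ℝ), Tendsto (fun n : ℕ => Fn n y) atTop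
      (𝓝 (1 - Real.exp (-(a * y^(-p))))) := by
    intro y hy
    have hy0 : (0:ℝ) < y := hy
    set k : ℕ → ℕ := fun n => ⌈y * (n:ℝ)^(1/p)⌉₊ with hkdef
    have hsT : Tendsto (fun n : ℕ => (n:ℝ)^(1/p)) atTop atTop :=
      (tendsto_rpow_atTop (by positivity)).comp tendsto_natCast_atTop_atTop
    have hys : Tendsto (fun n : ℕ => y * (n:ℝ)^(1/p)) atTop atTop :=
      hsT.const_mul_atTop hy0
    have hk : Tendsto k atTop atTop := by
      rw [tendsto_atTop]
      intro b
      filter_upwards [hys.eventually_ge_atTop (b:ℝ)] with n hn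
      exact_mod_cast hn.trans (Nat.le_ceil _)
    have hks : Tendsto (fun n : ℕ => (k n : ℝ) / (n:ℝ)^(1/p)) atTop (𝓝 y) := by
      refine tendsto_of_tendsto_of_tendsto_of_le_of_le' (g := fun _ : ℕ => y)
        (h := fun n : ℕ => y + ((n:ℝ)^(1/p))⁻¹) tendsto_const_nhds ?_ ?_ ?_
      · simpa using (tendsto_const_nhds (x := y) (f := atTop (α := ℕ))).add
          hsT.inv_tendsto_atTop
      · filter_upwards [eventually_ge_atTop 1] with n hn
        rw [le_div_iff₀ (hs0 n hn)]
        exact Nat.le_ceil _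
      · filter_upwards [eventually_ge_atTop 1] with n hn
        have hsn := hs0 n hn
        rw [div_le_iff₀ hsn]
        have h1 : (k n : ℝ) < y * (n:ℝ)^(1/p) + 1 :=
          Nat.ceil_lt_add_one (by positivity)
        have h2 : (y + ((n:ℝ)^(1/p))⁻¹) * (n:ℝ)^(1/p) = y * (n:ℝ)^(1/p) + 1 := by
          field_simp
        rw [h2]
        linarith
    have hkp : Tendsto (fun n : ℕ => ((k n : ℝ) / (n:ℝ)^(1/p))^p) atTop (𝓝 (y^p)) :=
      ((Real.continuousAt_rpow_const y p (Or.inl hy0.ne')).tendsto).comp hks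
    have h2 : Tendsto (fun n : ℕ => (n:ℝ)/((k n : ℝ))^p) atTop (𝓝 ((y^p)⁻¹)) := by
      have h3 := hkp.inv₀ (ne_of_gt (Real.rpow_pos_of_pos hy0 p))
      refine h3.congr' ?_
      filter_upwards [eventually_ge_atTop 1, hk.eventually_ge_atTop 1] with n hn hkn
      have hn0 : (0:ℝ) < n := by exact_mod_cast hn
      have hk0 : (0:ℝ) < k n := by exact_mod_cast hkn
      have hsn : (0:ℝ) < (n:ℝ)^(1/p) := hs0 n hn
      rw [Real.div_rpow hk0.le hsn.le, hsp n, inv_div]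
    have hnm : Tendsto (fun n : ℕ => (n:ℝ) * m (k n)) atTop (𝓝 (a * y^(-p))) := by
      rw [Real.rpow_neg hy0.le]
      have h3 := ((hasym.comp hk).mul h2)
      refine h3.congr' ?_
      filter_upwards [hk.eventually_ge_atTop 1] with n hkn
      have hk0 : (0:ℝ) < k n := by exact_mod_cast hkn
      have hkp0 : ((k n : ℝ))^p ≠ 0 := ne_of_gt (Real.rpow_pos_of_pos hk0 _)
      simp only [Function.comp]
      field_simp
    have hfin := aux_exp (fun n => m (k n)) (a * y^(-p))
      (mul_pos ha0 (Real.rpow_pos_of_pos hy0 _)) hnm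
    simpa only [hFndef] using tendsto_const_nhds.sub hfin
  -- dominated convergence
  have hDCT := MeasureTheory.tendsto_integral_filter_of_dominated_convergence
    (μ := volume.restrict (Set.Ioi 0)) (F := Fn)
    (f := fun y => 1 - Real.exp (-(a * y^(-p)))) (fun y => min 1 (C * y^(-p)))
    (Filter.Eventually.of_forall hFnmeas)
    (by
      filter_upwards [eventually_ge_atTop 1] with n hn
      exact (ae_restrict_iff' measurableSet_Ioi).mpr (Filter.Eventually.of_forall (hFnb n hn)))
    (aux_bound C p hC0.le hp1)
    ((ae_restrict_iff' measurableSet_Ioi).mpr (Filter.Eventually.of_forall hptw))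
  rw [aux_int a p ha0 hp1] at hDCT
  -- conclusion
  have hfinal : Tendsto (fun n : ℕ => (n:ℝ)^(-(1/(1+β))) *
      ∑ k ∈ Icc 1 n, (-1:ℝ)^k * (n.choose k : ℝ) * ∑' j : ℕ, m (j+1)^k) atTop
      (𝓝 (-(a^(1/p) * Real.Gamma (1 - 1/p)))) := by
    refine hDCT.neg.congr' ?_
    filter_upwards [eventually_ge_atTop 1] with n hn
    rw [hrw n hn, ← hrep n hn]
    ring
  have hγ : (1:ℝ) - 1/p = β/(β+1) := by
    rw [hpdef]
    field_simp
    ring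
  rw [hγ] at hfinal
  exact hfinal
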